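/- Let α ≥ 2 be an integer and let C be a minimal d_α-D_α cut in A_α with C ≠ {d_α}. Then for every nonempty S ⊆ {1,…,α−1}: if x_{S∪{α}} ∉ C, then x_{T∪{α}} ∉ C for every nonempty proper subset T ⊂ S. -/

import Mathlib

/-- Raw vertex names for the auxiliary graph `A_α`: the special vertex `top = d_α`,
vertices `d S`, and vertices `x S`. -/
inductive AV : Type where
  | top : AV
  | d : Finset ℕ → AV
  | x : Finset ℕ → AV
deriving DecidableEq

/-- The vertices actually present in `A_α`: `d_α`; `d S` for nonempty
`S ⊆ {1, …, α-1}`; and `x S` for `S ⊆ {1, …, α}` with `|S| ≥ 2`. -/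
def AValid (α : ℕ) : AV → Prop
  | AV.top => True
  | AV.d S => S.Nonempty ∧ S ⊆ Finset.Icc 1 (α - 1)
  | AV.x S => 2 ≤ S.card ∧ S ⊆ Finset.Icc 1 α

/-- One-sided adjacency for `A_α`: `d_α x_S` when `α ∈ S`; `d_S x_T` when
`S ∩ T ≠ ∅`; `x_S x_T` when `S ≠ T` and `S ∩ T ≠ ∅`. -/
def AAdj (α : ℕ) : AV → AV → Prop
  | AV.top, AV.x S => α ∈ S
  | AV.d S, AV.x T => (S ∩ T).Nonempty
  | AV.x S, AV.x T => S ≠ T ∧ (S ∩ T).Nonempty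
  | _, _ => False

/-- The auxiliary graph `A_α`, on the valid vertices. -/
def Agraph (α : ℕ) : SimpleGraph {v : AV // AValid α v} where
  Adj a b := AAdj α a.1 b.1 ∨ AAdj α b.1 a.1
  symm := ⟨fun _ _ h => Or.symm h⟩
  loopless := by
    constructor
    rintro ⟨v, hv⟩ h
    rcases v with _ | S | S <;> simp only [AAdj] at h <;> tauto

/-- The vertex `d_α` of `A_α`. -/
def dTop (α : ℕ) : {v : AV // AValid α v} := ⟨AV.top, trivial⟩

/-- The set `D_α = {d_S : S ⊆ {1, …, α-1}, S ≠ ∅}` of vertices of `A_α`. -/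
def Dset (α : ℕ) : Set {v : AV // AValid α v} := {v | ∃ S, v.1 = AV.d S}

/-- `C` is an `A`-`B` cut in `G`: the graph `G - C` (i.e. the subgraph of `G`
induced on `Cᶜ`) contains no path from `A \ C` to `B \ C`. -/
def IsCut {V : Type*} (G : SimpleGraph V) (A B C : Set V) : Prop :=
  ∀ (a b : ↥(Cᶜ : Set V)), (a : V) ∈ A → (b : V) ∈ B →
    ¬ (G.induce (Cᶜ : Set V)).Reachable a b

/-- `C` is a minimal `A`-`B` cut in `G`. -/
def IsMinimalCut {V : Type*} (G : SimpleGraph V) (A B C : Set V) : Prop :=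
  IsCut G A B C ∧ ∀ x ∈ C, ¬ IsCut G A B (C \ {x})

/-- Validity of the vertex `x_{S ∪ {α}}` for nonempty `S ⊆ {1, …, α-1}`. -/
lemma aValid_x_union (α : ℕ) (hα : 2 ≤ α) (S : Finset ℕ)
    (hS : S ⊆ Finset.Icc 1 (α - 1)) (hne : S.Nonempty) :
    AValid α (AV.x (S ∪ {α})) := by
  have hαS : α ∉ S := by
    intro h
    have := (Finset.mem_Icc.1 (hS h)).2
    omega
  constructor
  · have hcard : (S ∪ {α}).card = S.card + 1 := by
      rw [Finset.union_comm, ← Finset.insert_eq, Finset.card_insert_of_notMem hαS]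
    have : 1 ≤ S.card := Finset.one_le_card.2 hne
    omega
  · refine Finset.union_subset (hS.trans (Finset.Icc_subset_Icc le_rfl (Nat.sub_le α 1))) ?_
    simp only [Finset.singleton_subset_iff, Finset.mem_Icc]
    omega

/-- Validity of the vertex `x_R` for `R ⊆ {1, …, α-1}` with `|R| ≥ 2`. -/
lemma aValid_x_low (α : ℕ) (R : Finset ℕ) (hR : R ⊆ Finset.Icc 1 (α - 1))
    (hcard : 2 ≤ R.card) : AValid α (AV.x R) :=
  ⟨hcard, hR.trans (Finset.Icc_subset_Icc le_rfl (Nat.sub_le α 1))⟩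

/-- Let `C` be a minimal `d_α`-`D_α` cut in `A_α` with `C ≠ {d_α}`.  If
`x_{S ∪ {α}} ∉ C` for a nonempty `S ⊆ {1, …, α-1}`, then `x_{T ∪ {α}} ∉ C` for
every nonempty proper subset `T ⊂ S`. -/
theorem cut_x_mono (α : ℕ) (hα : 2 ≤ α) (C : Set {v : AV // AValid α v})
    (hC : IsMinimalCut (Agraph α) {dTop α} (Dset α) C) (hCne : C ≠ {dTop α})
    (S : Finset ℕ) (hSne : S.Nonempty) (hS : S ⊆ Finset.Icc 1 (α - 1))
    (hxS : (⟨AV.x (S ∪ {α}), aValid_x_union α hα S hS hSne⟩ :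
      {v : AV // AValid α v}) ∉ C)
    (T : Finset ℕ) (hTne : T.Nonempty) (hTS : T ⊂ S) :
    (⟨AV.x (T ∪ {α}), aValid_x_union α hα T (hTS.subset.trans hS) hTne⟩ :
      {v : AV // AValid α v}) ∉ C := by
  intro hmem
  set xT : {v : AV // AValid α v} :=
    ⟨AV.x (T ∪ {α}), aValid_x_union α hα T (hTS.subset.trans hS) hTne⟩ with hxTdef
  set xS : {v : AV // AValid α v} :=
    ⟨AV.x (S ∪ {α}), aValid_x_union α hα S hS hSne⟩ with hxSdef
  have hαS : α ∉ S := by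
    intro h
    have := (Finset.mem_Icc.1 (hS h)).2
    omega
  have hαT : α ∉ T := fun h => hαS (hTS.subset h)
  have hsubset : T ∪ {α} ⊆ S ∪ {α} := Finset.union_subset_union_left hTS.subset
  have hneq : T ∪ {α} ≠ S ∪ {α} := by
    intro h
    apply hTS.ne
    ext a
    constructor <;> intro ha
    · exact hTS.subset ha
    · have : a ∈ T ∪ {α} := h ▸ Finset.mem_union_left _ ha
      rcases Finset.mem_union.1 this with h' | h'
      · exact h'
      · exfalso
        have : a = α := Finset.mem_singleton.1 h'
        exact hαS (this ▸ ha)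
  -- key adjacency transfer lemma
  have key : ∀ w : {v : AV // AValid α v}, (Agraph α).Adj xT w →
      w = xS ∨ (Agraph α).Adj xS w := by
    rintro ⟨w, hw⟩ hadj
    obtain h | h := hadj
    · -- AAdj α (x (T∪{α})) w
      cases w with
      | top => exact absurd h (by simp [AAdj])
      | d U => exact absurd h (by simp [AAdj])
      | x U =>
        obtain ⟨hUne, hUinter⟩ := h
        by_cases hU : U = S ∪ {α}
        · exact Or.inl (Subtype.ext (by simp [hU, hxSdef]))
        · refine Or.inr (Or.inl ?_)
          refine ⟨fun hh => hU hh.symm, ?_⟩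
          exact hUinter.mono (Finset.inter_subset_inter hsubset Finset.Subset.rfl)
    · -- AAdj α w (x (T∪{α}))
      cases w with
      | top =>
        refine Or.inr (Or.inr ?_)
        show α ∈ S ∪ {α}
        simp
      | d U =>
        refine Or.inr (Or.inr ?_)
        show (U ∩ (S ∪ {α})).Nonempty
        exact h.mono (Finset.inter_subset_inter Finset.Subset.rfl hsubset)
      | x U =>
        obtain ⟨hUne, hUinter⟩ := h
        by_cases hU : U = S ∪ {α}
        · exact Or.inl (Subtype.ext (by simp [hU, hxSdef]))
        · refine Or.inr (Or.inl ?_)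
          refine ⟨fun hh => hU hh.symm, ?_⟩
          have : (U ∩ (S ∪ {α})).Nonempty :=
            hUinter.mono (Finset.inter_subset_inter Finset.Subset.rfl hsubset)
          rw [Finset.inter_comm] at this
          exact this
  have hxSxT : xS ≠ xT := by
    intro hh
    apply hneq
    have := congrArg Subtype.val hh
    simp only [hxSdef, hxTdef, AV.x.injEq] at this
    exact this.symm
  obtain ⟨hcut, hmin⟩ := hC
  have hnot := hmin xT hmem
  rw [IsCut] at hnot
  push_neg at hnot
  obtain ⟨a, b, ha, hb, hr⟩ := hnot
  have memC : ∀ v : {v : AV // AValid α v}, v ∈ ((C \ {xT})ᶜ : Set _) → v ≠ xT →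
      v ∈ (Cᶜ : Set _) := by
    intro v hv hne' hvC
    exact hv ⟨hvC, by simpa using hne'⟩
  have hxSc : xS ∈ (Cᶜ : Set _) := hxS
  classical
  set f : ((C \ {xT})ᶜ : Set {v : AV // AValid α v}) → (Cᶜ : Set {v : AV // AValid α v}) :=
    fun u => if h : (u : {v : AV // AValid α v}) = xT then ⟨xS, hxSc⟩
      else ⟨u.1, memC u.1 u.2 h⟩ with hfdef
  have walkmap : ∀ (u v : ((C \ {xT})ᶜ : Set {v : AV // AValid α v})),
      ((Agraph α).induce ((C \ {xT})ᶜ : Set _)).Walk u v →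
      ((Agraph α).induce (Cᶜ : Set _)).Reachable (f u) (f v) := by
    intro u v p
    induction p with
    | nil => exact SimpleGraph.Reachable.refl _
    | @cons u w v h p ih =>
      refine SimpleGraph.Reachable.trans ?_ ih
      have hadj : (Agraph α).Adj u.1 w.1 := h
      by_cases huw : f u = f w
      · exact huw ▸ SimpleGraph.Reachable.refl _
      · refine SimpleGraph.Adj.reachable ?_
        by_cases hu : (u : {v : AV // AValid α v}) = xT
        · by_cases hw : (w : {v : AV // AValid α v}) = xT
          · exact absurd (Subtype.ext (hu.trans hw.symm) : u = w)
              (fun hh => (Agraph α).loopless.irrefl u.1 (hh ▸ hadj))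
          · rcases key w.1 ((congrArg (fun z => (Agraph α).Adj z w.1) hu).mp hadj) with heq | hadj'
            · exact absurd (by simp [hfdef, hu, hw, heq, hxSxT] : f u = f w) huw
            · show (Agraph α).Adj (f u).1 (f w).1
              simp only [hfdef, hu, hw, dif_pos, dif_neg, not_false_iff]
              exact hadj'
        · by_cases hw : (w : {v : AV // AValid α v}) = xT
          · rcases key u.1 ((congrArg (fun z => (Agraph α).Adj z u.1) hw).mp hadj.symm) with heq | hadj'
            · exact absurd (by simp [hfdef, hu, hw, heq, hxSxT] : f u = f w) huw
            · show (Agraph α).Adj (f u).1 (f w).1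
              simp only [hfdef, hu, hw, dif_pos, dif_neg, not_false_iff]
              exact hadj'.symm
          · show (Agraph α).Adj (f u).1 (f w).1
            simp only [hfdef, hu, hw, dif_neg, not_false_iff]
            exact hadj
  obtain ⟨p⟩ := hr
  have hreach := walkmap a b p
  have haT : (a : {v : AV // AValid α v}) ≠ xT := by
    have : (a : {v : AV // AValid α v}) = dTop α := ha
    rw [this]
    intro hh
    exact absurd (congrArg Subtype.val hh) (by simp [dTop, hxTdef])
  have hbT : (b : {v : AV // AValid α v}) ≠ xT := by
    obtain ⟨U, hU⟩ := hb
    intro hh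
    rw [hh] at hU
    simp [hxTdef] at hU
  have hfa : ((f a : (Cᶜ : Set _)) : {v : AV // AValid α v}) ∈
      ({dTop α} : Set {v : AV // AValid α v}) := by
    simp only [hfdef, dif_neg haT]
    exact ha
  have hfb : ((f b : (Cᶜ : Set _)) : {v : AV // AValid α v}) ∈ Dset α := by
    simp only [hfdef, dif_neg hbT]
    exact hb
  exact hcut (f a) (f b) hfa hfb hreach
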